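/- Let η ∈ (0,1]. There exists a constant C > 0 (depending only on η) such that for every ε ∈ (0,1) and every a ≥ 0, |(ε+a²)·log(ε+a²) − a² − ε·log ε| ≤ C·(a² + a^{2−2η} + a^{2+2η}). -/
import Mathlib


private lemma log_le_rpow_div_aux {y t : ℝ} (hy : 0 < y) (ht : 0 < t) :
    Real.log y ≤ y ^ t / t := by
  have h := Real.log_le_sub_one_of_pos (Real.rpow_pos_of_pos hy t)
  rw [Real.log_rpow hy] at h
  rw [le_div_iff₀ ht]
  nlinarith

set_option maxHeartbeats 1600000 in
/-- For `η ∈ (0,1]` there is `C > 0` such that for every `ε ∈ (0,1)` and every `a ≥ 0`,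
`|(ε+a²)log(ε+a²) − a² − ε log ε| ≤ C(a² + a^{2−2η} + a^{2+2η})`. -/
theorem stmt_12 (η : ℝ) (hη : η ∈ Set.Ioc (0:ℝ) 1) :
    ∃ C : ℝ, 0 < C ∧ ∀ ε ∈ Set.Ioo (0:ℝ) 1, ∀ a : ℝ, 0 ≤ a →
      |(ε + a ^ 2) * Real.log (ε + a ^ 2) - a ^ 2 - ε * Real.log ε| ≤
        C * (a ^ 2 + a ^ (2 - 2 * η) + a ^ (2 + 2 * η)) := by
  obtain ⟨hη0, hη1⟩ := hη
  refine ⟨2 / η, by positivity, ?_⟩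
  intro ε hε a ha
  obtain ⟨hε0, hε1⟩ := hε
  rcases ha.eq_or_lt with rfl | ha0
  · have h0 : ((0:ℝ) + (0:ℝ) ^ 2) = 0 + 0 := by norm_num
    have : (ε + (0:ℝ) ^ 2) * Real.log (ε + (0:ℝ) ^ 2) - (0:ℝ) ^ 2 - ε * Real.log ε = 0 := by
      norm_num
    rw [this, abs_zero]
    positivity
  set ρ : ℝ := a ^ 2 with hρdef
  have hρ : 0 < ρ := by positivity
  have hεEnglish : 0 < ε + ρ := by positivity
  -- rewrite the rpow terms
  have h1 : a ^ (2 - 2 * η) = ρ ^ (1 - η) := by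
    rw [show (2:ℝ) - 2 * η = 2 * (1 - η) by ring, Real.rpow_mul ha, Real.rpow_two]
  have h2 : a ^ (2 + 2 * η) = ρ ^ (1 + η) := by
    rw [show (2:ℝ) + 2 * η = 2 * (1 + η) by ring, Real.rpow_mul ha, Real.rpow_two]
  rw [h1, h2]
  -- decomposition
  have hlogdiv : Real.log (1 + ρ / ε) = Real.log (ε + ρ) - Real.log ε := by
    rw [show (1 + ρ / ε) = (ε + ρ) / ε by field_simp,
      Real.log_div hεEnglish.ne' hε0.ne']
  have key : (ε + ρ) * Real.log (ε + ρ) - ρ - ε * Real.log ε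
      = ε * Real.log (1 + ρ / ε) + ρ * Real.log (ε + ρ) - ρ := by
    rw [hlogdiv]; ring
  set L : ℝ := Real.log (1 + ρ / ε) with hLdef
  have hdivnn : (0:ℝ) ≤ ρ / ε := by positivity
  have hL1 : 0 ≤ L := Real.log_nonneg (by linarith)
  have hL2 : ε * L ≤ ρ := by
    have h := Real.log_le_sub_one_of_pos (show (0:ℝ) < 1 + ρ / ε by positivity)
    have : L ≤ ρ / ε := by rw [hLdef]; linarith
    calc ε * L ≤ ε * (ρ / ε) := by nlinarith
      _ = ρ := by field_simp
  -- bound on ρ * |log(ε+ρ)|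
  have hmain : ρ * |Real.log (ε + ρ)| ≤ 2 * (ρ ^ (1 - η) + ρ ^ (1 + η)) / η := by
    have hρη : 0 < ρ ^ η := Real.rpow_pos_of_pos hρ η
    have hρpη : ρ * ρ ^ η = ρ ^ (1 + η) := by
      rw [Real.rpow_add hρ, Real.rpow_one]
    have hρmη : ρ * ρ ^ (-η) = ρ ^ (1 - η) := by
      rw [show (1:ℝ) - η = 1 + (-η) by ring, Real.rpow_add hρ, Real.rpow_one]
    have h1mη : 0 < ρ ^ (1 - η) := Real.rpow_pos_of_pos hρ _
    by_cases hcase : 1 ≤ ε + ρ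
    · rw [abs_of_nonneg (Real.log_nonneg hcase)]
      have hbound : Real.log (ε + ρ) ≤ 2 * ρ ^ η / η := by
        by_cases hρ1 : ρ ≤ 1
        · have l1 : Real.log (ε + ρ) ≤ Real.log (1 + ρ) :=
            Real.log_le_log hεEnglish (by linarith)
          have l2 : Real.log (1 + ρ) ≤ ρ := by
            have := Real.log_le_sub_one_of_pos (show (0:ℝ) < 1 + ρ by positivity)
            linarith
          have l3 : ρ ≤ ρ ^ η := by
            have := Real.rpow_le_rpow_of_exponent_ge hρ hρ1 hη1
            rwa [Real.rpow_one] at this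
          have l4 : ρ ^ η ≤ 2 * ρ ^ η / η := by
            rw [le_div_iff₀ hη0]; nlinarith
          linarith
        · push_neg at hρ1
          have l1 : Real.log (ε + ρ) ≤ (ε + ρ) ^ η / η :=
            log_le_rpow_div_aux hεEnglish hη0
          have l2 : (ε + ρ) ^ η ≤ (2 * ρ) ^ η :=
            Real.rpow_le_rpow hεEnglish.le (by linarith) hη0.le
          have l3 : (2 * ρ) ^ η = 2 ^ η * ρ ^ η :=
            Real.mul_rpow (by norm_num) hρ.le
          have l4 : (2:ℝ) ^ η ≤ 2 := by
            have := Real.rpow_le_rpow_of_exponent_le (by norm_num : (1:ℝ) ≤ 2) hη1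
            rwa [Real.rpow_one] at this
          have : (ε + ρ) ^ η ≤ 2 * ρ ^ η := by nlinarith
          calc Real.log (ε + ρ) ≤ (ε + ρ) ^ η / η := l1
            _ ≤ 2 * ρ ^ η / η := by gcongr
      calc ρ * Real.log (ε + ρ) ≤ ρ * (2 * ρ ^ η / η) := by nlinarith
        _ = 2 * ρ ^ (1 + η) / η := by rw [← hρpη]; ring
        _ ≤ 2 * (ρ ^ (1 - η) + ρ ^ (1 + η)) / η := by gcongr 2 * ?_ / η; nlinarith
    · push_neg at hcase
      have hlogneg : Real.log (ε + ρ) ≤ 0 := Real.log_nonpos hεEnglish.le hcase.le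
      rw [abs_of_nonpos hlogneg]
      have l1 : -Real.log (ε + ρ) = Real.log ((ε + ρ)⁻¹) := (Real.log_inv _).symm
      have l2 : Real.log ((ε + ρ)⁻¹) ≤ ((ε + ρ)⁻¹) ^ η / η :=
        log_le_rpow_div_aux (by positivity) hη0
      have l3 : ((ε + ρ)⁻¹) ^ η = (ε + ρ) ^ (-η) := by
        rw [Real.inv_rpow hεEnglish.le, ← Real.rpow_neg hεEnglish.le]
      have l4 : (ε + ρ) ^ (-η) ≤ ρ ^ (-η) :=
        Real.rpow_le_rpow_of_nonpos hρ (by linarith) (by linarith)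
      have l5 : -Real.log (ε + ρ) ≤ ρ ^ (-η) / η := by
        rw [l1]
        calc Real.log ((ε + ρ)⁻¹) ≤ ((ε + ρ)⁻¹) ^ η / η := l2
          _ = (ε + ρ) ^ (-η) / η := by rw [l3]
          _ ≤ ρ ^ (-η) / η := by gcongr
      have hρnη : 0 < ρ ^ (-η) := Real.rpow_pos_of_pos hρ _
      have h1pη : 0 < ρ ^ (1 + η) := Real.rpow_pos_of_pos hρ _
      calc ρ * -Real.log (ε + ρ) ≤ ρ * (ρ ^ (-η) / η) :=
            mul_le_mul_of_nonneg_left l5 hρ.le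
        _ = ρ ^ (1 - η) / η := by rw [← hρmη]; ring
        _ ≤ 2 * (ρ ^ (1 - η) + ρ ^ (1 + η)) / η := by
            rw [div_le_div_iff_of_pos_right hη0]; linarith
  -- combine
  rw [key]
  have habs : |ε * L + ρ * Real.log (ε + ρ) - ρ|
      ≤ ε * L + ρ * |Real.log (ε + ρ)| + ρ := by
    have h1 := abs_sub (ε * L + ρ * Real.log (ε + ρ)) ρ
    have h2 := abs_add_le (ε * L) (ρ * Real.log (ε + ρ))
    have h3 : |ε * L| = ε * L := abs_of_nonneg (mul_nonneg hε0.le hL1)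
    have h4 : |ρ * Real.log (ε + ρ)| = ρ * |Real.log (ε + ρ)| := by
      rw [abs_mul, abs_of_nonneg hρ.le]
    have h5 : |ρ| = ρ := abs_of_nonneg hρ.le
    calc |ε * L + ρ * Real.log (ε + ρ) - ρ|
        ≤ |ε * L + ρ * Real.log (ε + ρ)| + |ρ| := h1
      _ ≤ |ε * L| + |ρ * Real.log (ε + ρ)| + |ρ| := by linarith
      _ = ε * L + ρ * |Real.log (ε + ρ)| + ρ := by rw [h3, h4, h5]
  have h1mη : 0 ≤ ρ ^ (1 - η) := (Real.rpow_pos_of_pos hρ _).le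
  have h1pη : 0 ≤ ρ ^ (1 + η) := (Real.rpow_pos_of_pos hρ _).le
  have hfinal : ε * L + ρ * |Real.log (ε + ρ)| + ρ
      ≤ 2 / η * (ρ + ρ ^ (1 - η) + ρ ^ (1 + η)) := by
    have hη' : 1 / η ≥ 1 := by rw [ge_iff_le, le_div_iff₀ hη0]; linarith
    have : 2 * (ρ ^ (1 - η) + ρ ^ (1 + η)) / η
        = 2 / η * (ρ ^ (1 - η) + ρ ^ (1 + η)) := by ring
    rw [this] at hmain
    have h22 : (2:ℝ) ≤ 2 / η := by rw [le_div_iff₀ hη0]; nlinarith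
    have h2ρ : 2 * ρ ≤ 2 / η * ρ := mul_le_mul_of_nonneg_right h22 hρ.le
    have hdist : 2 / η * (ρ + ρ ^ (1 - η) + ρ ^ (1 + η))
        = 2 / η * ρ + 2 / η * (ρ ^ (1 - η) + ρ ^ (1 + η)) := by ring
    linarith
  linarith
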